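/- Let c > 0 and let (μ_n) be a sequence of nonnegative reals with lim_{n→∞} μ_n/n = c. Then lim_{n→∞} (1/n²)·( log(n!) + Σ_{k=0}^{n−1} log γ_{μ_n}(k) − (n·μ_n + n²/2)·log n ) = −( 3/4 + (1/2)·log 2 + c·(3/2 + log 2) + c²·log(2c) − (c² + c + 1/4)·log(1 + 2c) ), where γ_μ(2m) = m!·Γ(m + μ + 1/2) and γ_μ(2m+1) = m!·Γ(m + μ + 3/2). -/

import Mathlib

open MeasureTheory Real Filter Topology

/-- `γ_μ(2m) = m!·Γ(m + μ + 1/2)` and `γ_μ(2m+1) = m!·Γ(m + μ + 3/2)`. -/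
noncomputable def gam (μ : ℝ) (k : ℕ) : ℝ :=
  if k % 2 = 0 then (Nat.factorial (k / 2) : ℝ) * Real.Gamma ((k / 2 : ℕ) + μ + 1 / 2)
  else (Nat.factorial (k / 2) : ℝ) * Real.Gamma ((k / 2 : ℕ) + μ + 3 / 2)

noncomputable def ff (t : ℝ) : ℝ := t * Real.log t - t
noncomputable def FF (t : ℝ) : ℝ := t ^ 2 * Real.log t / 2 - 3 * t ^ 2 / 4

lemma ff_deriv {t : ℝ} (ht : 0 < t) : HasDerivAt ff (Real.log t) t := by
  have h := (Real.hasDerivAt_log ht.ne').const_mul t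
  have h2 := ((hasDerivAt_id t).mul (Real.hasDerivAt_log ht.ne')).sub (hasDerivAt_id t)
  refine h2.congr_deriv ?_
  field_simp
  simp

lemma FF_deriv {t : ℝ} (ht : 0 < t) : HasDerivAt FF (ff t) t := by
  have h2 := ((((hasDerivAt_pow 2 t).mul (Real.hasDerivAt_log ht.ne')).div_const 2).sub
    (((hasDerivAt_pow 2 t).const_mul 3).div_const 4))
  refine h2.congr_deriv ?_
  unfold ff
  field_simp
  ring

lemma ff_cont {s : Set ℝ} (hs : ∀ x ∈ s, x ≠ 0) : ContinuousOn ff s := by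
  apply ContinuousOn.sub
  · exact continuousOn_id.mul (Real.continuousOn_log.mono (by intro x hx; exact hs x hx))
  · exact continuousOn_id

lemma ff_slope {s t : ℝ} (hs : 1 ≤ s) (hst : s ≤ t) :
    (t - s) * Real.log s ≤ ff t - ff s ∧ ff t - ff s ≤ (t - s) * Real.log t := by
  rcases eq_or_lt_of_le hst with rfl | h
  · simp
  · obtain ⟨ξ, hξ, hsl⟩ := exists_hasDerivAt_eq_slope ff Real.log h
      (ff_cont (fun x hx => by have := hx.1; intro h; simp [h] at this; linarith))
      (fun x hx => ff_deriv (by have := hx.1; linarith))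
    have hsp : (0:ℝ) < t - s := by linarith
    have h1 : ff t - ff s = (t - s) * Real.log ξ := by
      rw [hsl]; field_simp
    have hls : Real.log s ≤ Real.log ξ := Real.log_le_log (by linarith) hξ.1.le
    have hlt : Real.log ξ ≤ Real.log t := Real.log_le_log (by linarith [hξ.1]) hξ.2.le
    constructor <;> rw [h1] <;> nlinarith

lemma ff_mono {s t : ℝ} (hs : 1 ≤ s) (hst : s ≤ t) : ff s ≤ ff t := by
  have h := (ff_slope hs hst).1
  have : 0 ≤ Real.log s := Real.log_nonneg hs
  nlinarith

lemma ff_abs {t : ℝ} (ht : 1 ≤ t) : |ff t| ≤ t * (1 + Real.log t) := by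
  have h1 : 0 ≤ Real.log t := Real.log_nonneg ht
  rw [abs_le]; unfold ff; constructor <;> nlinarith

lemma tlog_mono {u v : ℝ} (hu : 1 ≤ u) (huv : u ≤ v) :
    u * (1 + Real.log u) ≤ v * (1 + Real.log v) := by
  have := Real.log_nonneg hu
  have := Real.log_le_log (by linarith) huv
  nlinarith

lemma logfact {n : ℕ} (hn : 1 ≤ n) :
    ff n + 1 ≤ Real.log (Nat.factorial n) ∧
    Real.log (Nat.factorial n) ≤ ff n + 1 + Real.log n := by
  induction n with
  | zero => omega
  | succ n ih =>
    rcases Nat.eq_or_lt_of_le hn with h | h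
    · have h0 : n = 0 := by omega
      subst h0
      norm_num [ff]
    · have hn1 : 1 ≤ n := by omega
      obtain ⟨ih1, ih2⟩ := ih hn1
      have hnp : (0:ℝ) < n := by exact_mod_cast hn1
      have hnp1 : (0:ℝ) < (n:ℝ) + 1 := by linarith
      have hfact : Real.log (Nat.factorial (n+1)) =
          Real.log ((n:ℝ)+1) + Real.log (Nat.factorial n) := by
        rw [Nat.factorial_succ]
        push_cast
        rw [Real.log_mul (by positivity) (by positivity)]
      -- key inequalities
      have key1 : Real.log ((n:ℝ)+1) - Real.log n ≤ 1 / n := by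
        rw [← Real.log_div (by positivity) (by positivity)]
        have := Real.log_le_sub_one_of_pos (x := ((n:ℝ)+1)/n) (by positivity)
        have hne : (n:ℝ) ≠ 0 := hnp.ne'
        calc Real.log (((n:ℝ)+1)/n) ≤ ((n:ℝ)+1)/n - 1 := this
          _ = 1/n := by field_simp; ring
      have key2 : 1 / ((n:ℝ)+1) ≤ Real.log ((n:ℝ)+1) - Real.log n := by
        rw [← Real.log_div (by positivity) (by positivity)]
        have := Real.log_le_sub_one_of_pos (x := (n:ℝ)/((n:ℝ)+1)) (by positivity)
        have h2 : Real.log ((n:ℝ)/((n:ℝ)+1)) = - Real.log (((n:ℝ)+1)/n) := by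
          rw [← Real.log_inv]; congr 1; field_simp
        rw [h2] at this
        have h3 : (n:ℝ)/((n:ℝ)+1) - 1 = -(1/((n:ℝ)+1)) := by field_simp; ring
        linarith [this, h3 ▸ this]
      constructor
      · rw [hfact]
        unfold ff
        push_cast
        unfold ff at ih1
        have : (n:ℝ) * (Real.log ((n:ℝ)+1) - Real.log n) ≤ 1 := by
          calc (n:ℝ) * (Real.log ((n:ℝ)+1) - Real.log n) ≤ (n:ℝ) * (1/n) :=
                mul_le_mul_of_nonneg_left key1 hnp.le
            _ = 1 := by field_simp
        nlinarith
      · rw [hfact]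
        unfold ff
        push_cast
        unfold ff at ih2
        have : 1 ≤ ((n:ℝ)+1) * (Real.log ((n:ℝ)+1) - Real.log n) := by
          calc (1:ℝ) = ((n:ℝ)+1) * (1/((n:ℝ)+1)) := by field_simp
            _ ≤ ((n:ℝ)+1) * (Real.log ((n:ℝ)+1) - Real.log n) :=
                mul_le_mul_of_nonneg_left key2 hnp1.le
        nlinarith

lemma gamma_bounds {x : ℝ} (hx : 2 ≤ x) :
    ff x - 2 * Real.log x ≤ Real.log (Real.Gamma x) ∧
    Real.log (Real.Gamma x) ≤ ff x + 1 + Real.log x := by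
  set k := Nat.floor x with hk
  have hk2 : 2 ≤ k := Nat.le_floor (by exact_mod_cast hx)
  have hkx : (k:ℝ) ≤ x := Nat.floor_le (by linarith)
  have hxk : x < (k:ℝ) + 1 := Nat.lt_floor_add_one x
  have hx0 : (0:ℝ) < x := by linarith
  have hlx : 0 ≤ Real.log x := Real.log_nonneg (by linarith)
  -- Gamma k = (k-1)!
  have hGk : Real.Gamma (k:ℝ) = Nat.factorial (k-1) := by
    have : ((k-1:ℕ):ℝ) + 1 = (k:ℝ) := by
      have : 1 ≤ k := by omega
      push_cast [Nat.cast_sub this]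
      ring
    rw [← this, Real.Gamma_nat_eq_factorial]
  have hGk1 : Real.Gamma ((k:ℝ)+1) = Nat.factorial k := Real.Gamma_nat_eq_factorial k
  have hmono := Real.Gamma_strictMonoOn_Ici.monotoneOn
  have hGpos : 0 < Real.Gamma x := Real.Gamma_pos_of_pos hx0
  have hklo : Real.Gamma (k:ℝ) ≤ Real.Gamma x := by
    apply hmono _ (Set.mem_Ici.2 hx) hkx
    exact Set.mem_Ici.2 (by exact_mod_cast hk2)
  have hkhi : Real.Gamma x ≤ Real.Gamma ((k:ℝ)+1) := by
    apply hmono (Set.mem_Ici.2 hx) _ hxk.le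
    have : (2:ℝ) ≤ (k:ℝ) + 1 := by exact_mod_cast Nat.le_succ_of_le hk2
    exact Set.mem_Ici.2 this
  constructor
  · -- lower bound
    have h1 : Real.log (Nat.factorial (k-1)) ≤ Real.log (Real.Gamma x) := by
      rw [← hGk]
      exact Real.log_le_log (by rw [hGk]; positivity) hklo
    have h2 : ff ((k:ℝ)-1) + 1 ≤ Real.log (Nat.factorial (k-1)) := by
      have hc : ((k-1:ℕ):ℝ) = (k:ℝ) - 1 := by
        have : 1 ≤ k := by omega
        push_cast [Nat.cast_sub this]; ring
      rw [← hc]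
      exact (logfact (by omega)).1
    have h3 : ff x - ff ((k:ℝ)-1) ≤ (x - ((k:ℝ)-1)) * Real.log x := by
      have hk1 : (1:ℝ) ≤ (k:ℝ) - 1 := by
        have : (2:ℝ) ≤ (k:ℝ) := by exact_mod_cast hk2
        linarith
      exact (ff_slope hk1 (by linarith)).2
    have h4 : (x - ((k:ℝ)-1)) * Real.log x ≤ 2 * Real.log x := by
      apply mul_le_mul_of_nonneg_right _ hlx
      linarith
    linarith
  · -- upper bound
    have h1 : Real.log (Real.Gamma x) ≤ Real.log (Nat.factorial k) := by
      rw [← hGk1]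
      exact Real.log_le_log hGpos hkhi
    have h2 : Real.log (Nat.factorial k) ≤ ff (k:ℝ) + 1 + Real.log k :=
      (logfact (by omega)).2
    have h3 : ff (k:ℝ) ≤ ff x := ff_mono (by exact_mod_cast Nat.one_le_of_lt hk2) hkx
    have h4 : Real.log (k:ℝ) ≤ Real.log x := Real.log_le_log (by exact_mod_cast by omega) hkx
    linarith

lemma sum_ff (s : ℝ) (hs : 1 ≤ s) (N : ℕ) :
    |(∑ k ∈ Finset.range N, ff ((k:ℝ)/2 + s)) - (2 * FF ((N:ℝ)/2 + s) - 2 * FF s)| ≤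
    2 * (((N:ℝ)/2 + s) * (1 + Real.log ((N:ℝ)/2 + s))) := by
  set G : ℝ → ℝ := fun x => 2 * FF (x/2 + s) with hG
  have hGd : ∀ y : ℝ, 0 ≤ y → HasDerivAt G (ff (y/2 + s)) y := by
    intro y hy
    have h1 : HasDerivAt (fun x : ℝ => x/2 + s) (1/2) y := by
      simpa using (hasDerivAt_id y).div_const 2 |>.add_const s
    have h2 := ((FF_deriv (t := y/2 + s) (by linarith)).comp y h1).const_mul 2
    refine h2.congr_deriv ?_
    ring
  have step : ∀ x : ℝ, 0 ≤ x →
      ff (x/2 + s) ≤ G (x+1) - G x ∧ G (x+1) - G x ≤ ff ((x+1)/2 + s) := by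
    intro x hx
    obtain ⟨ξ, hξ, hsl⟩ := exists_hasDerivAt_eq_slope G (fun y => ff (y/2 + s))
      (by linarith : x < x + 1)
      (fun y hy => (hGd y (by linarith [hy.1])).continuousAt.continuousWithinAt)
      (fun y hy => hGd y (by linarith [hy.1.le]))
    have heq : G (x+1) - G x = ff (ξ/2 + s) := by
      rw [hsl]; ring
    have hx1 : (1:ℝ) ≤ x/2 + s := by linarith
    constructor
    · rw [heq]; exact ff_mono hx1 (by linarith [hξ.1])
    · rw [heq]; exact ff_mono (by linarith [hξ.1]) (by linarith [hξ.2])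
  have tel : ∑ k ∈ Finset.range N, (G ((k:ℝ)+1) - G (k:ℝ)) = G (N:ℝ) - G 0 := by
    have := Finset.sum_range_sub (fun k : ℕ => G (k:ℝ)) N
    simpa [Nat.cast_add, Nat.cast_one] using this
  have upper : (∑ k ∈ Finset.range N, ff ((k:ℝ)/2 + s)) ≤ G (N:ℝ) - G 0 := by
    rw [← tel]
    apply Finset.sum_le_sum
    intro k _
    exact (step (k:ℝ) (by positivity)).1
  have lower : G (N:ℝ) - G 0 ≤
      (∑ k ∈ Finset.range N, ff ((k:ℝ)/2 + s)) + ff ((N:ℝ)/2 + s) - ff s := by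
    rw [← tel]
    have h1 : ∑ k ∈ Finset.range N, (G ((k:ℝ)+1) - G (k:ℝ)) ≤
        ∑ k ∈ Finset.range N, ff (((k:ℝ)+1)/2 + s) := by
      apply Finset.sum_le_sum
      intro k _
      exact (step (k:ℝ) (by positivity)).2
    have h2 : ∑ k ∈ Finset.range N, ff (((k:ℝ)+1)/2 + s) =
        (∑ k ∈ Finset.range N, ff ((k:ℝ)/2 + s)) + ff ((N:ℝ)/2 + s) - ff s := by
      have h3 := Finset.sum_range_succ' (fun k : ℕ => ff ((k:ℝ)/2 + s)) N
      have h4 := Finset.sum_range_succ (fun k : ℕ => ff ((k:ℝ)/2 + s)) N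
      have h5 : ∀ k : ℕ, ff (((k:ℕ):ℝ)/2 + s) = ff ((((k:ℕ):ℝ))/2 + s) := fun _ => rfl
      push_cast at h3 h4 ⊢
      rw [h4] at h3
      simp only [Nat.cast_zero, zero_div, zero_add] at h3
      linarith [h3]
    linarith [h1, h2.le, h2.ge]
  have hN0 : (0:ℝ) ≤ (N:ℝ)/2 := by positivity
  have hA1 : (1:ℝ) ≤ (N:ℝ)/2 + s := by linarith
  have habs1 : |ff s| ≤ ((N:ℝ)/2 + s) * (1 + Real.log ((N:ℝ)/2 + s)) :=
    le_trans (ff_abs hs) (tlog_mono hs (by linarith))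
  have habs2 : |ff ((N:ℝ)/2 + s)| ≤ ((N:ℝ)/2 + s) * (1 + Real.log ((N:ℝ)/2 + s)) :=
    ff_abs hA1
  have hG0 : G 0 = 2 * FF s := by simp [hG]
  have hGN : G (N:ℝ) = 2 * FF ((N:ℝ)/2 + s) := rfl
  rw [abs_le]
  rw [hG0, hGN] at upper lower
  constructor
  · rw [abs_le] at habs1 habs2
    linarith
  · linarith [abs_nonneg (ff s), abs_nonneg (ff ((N:ℝ)/2+s)), habs1, habs2, upper]

noncomputable def HH (t : ℝ) : ℝ :=
  (t + 1/2) ^ 2 * Real.log (t + 1/2) - t ^ 2 * Real.log t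
    - (1/4) * Real.log 2 - 3/4 - (3/2) * t

lemma fact_err {m : ℕ} {X : ℝ} (hmX : (m:ℝ) ≤ X) (hX : 1 ≤ Real.log X) :
    |Real.log (Nat.factorial m) - ff m| ≤ 1 + Real.log X := by
  rcases Nat.eq_zero_or_pos m with rfl | hm
  · simp [ff]
    linarith
  · obtain ⟨h1, h2⟩ := logfact hm
    have hlm : Real.log m ≤ Real.log X := by
      exact Real.log_le_log (by exact_mod_cast hm) hmX
    rw [abs_le]
    constructor <;> linarith

set_option maxHeartbeats 1000000 in
lemma per_term {μ : ℝ} (hμ2 : 2 ≤ μ) {k n : ℕ} (hkn : k < n) :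
    |Real.log (gam μ k) - (ff ((k:ℝ)/2) + ff ((k:ℝ)/2 + μ + 1/2))| ≤
    6 * (1 + Real.log ((n:ℝ) + μ + 2)) := by
  set X : ℝ := (n:ℝ) + μ + 2 with hXdef
  have hn1 : (1:ℝ) ≤ (n:ℝ) := by
    have : 1 ≤ n := Nat.one_le_iff_ne_zero.2 (by omega)
    exact_mod_cast this
  have hX5 : (5:ℝ) ≤ X := by simp [hXdef]; linarith
  have hXlog : 1 ≤ Real.log X := by
    rw [Real.le_log_iff_exp_le (by linarith)]
    have := Real.exp_one_lt_d9
    linarith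
  have hXlog0 : 0 ≤ Real.log X := by linarith
  set m : ℕ := k / 2 with hmdef
  have hmk : (m:ℝ) ≤ (k:ℝ)/2 := by
    have h0 : m * 2 ≤ k := Nat.div_mul_le_self k 2
    have h2 : (m:ℝ) * 2 ≤ k := by exact_mod_cast h0
    linarith
  have hkn' : (k:ℝ) < n := by exact_mod_cast hkn
  have hmX : (m:ℝ) ≤ X := by simp [hXdef]; linarith
  have hfe := fact_err hmX hXlog
  -- gamma argument
  have hy2 : (2:ℝ) ≤ (m:ℝ) + μ + 1/2 := by
    have : (0:ℝ) ≤ m := Nat.cast_nonneg m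
    linarith
  have hyX : (m:ℝ) + μ + 1/2 ≤ X := by simp [hXdef]; linarith
  have hylog : Real.log ((m:ℝ) + μ + 1/2) ≤ Real.log X := Real.log_le_log (by linarith) hyX
  have hge := gamma_bounds hy2
  have hgerr : |Real.log (Real.Gamma ((m:ℝ) + μ + 1/2)) - ff ((m:ℝ) + μ + 1/2)| ≤
      2 + 2 * Real.log X := by
    rw [abs_le]
    have hly0 : 0 ≤ Real.log ((m:ℝ) + μ + 1/2) := Real.log_nonneg (by linarith)
    constructor <;> [linarith [hge.1]; linarith [hge.2]]
  have hmpos : (0:ℝ) < Nat.factorial m := by exact_mod_cast Nat.factorial_pos m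
  rcases Nat.even_or_odd k with he | ho
  · -- even case : k = 2*m
    have hk2 : k % 2 = 0 := Nat.even_iff.1 he
    have hkm : k = 2 * m := by omega
    have hkr : (k:ℝ)/2 = (m:ℝ) := by
      rw [hkm]; push_cast; ring
    have hgam : gam μ k = (Nat.factorial m : ℝ) * Real.Gamma ((m:ℝ) + μ + 1/2) := by
      rw [gam, if_pos hk2]
    have hGpos : 0 < Real.Gamma ((m:ℝ) + μ + 1/2) := Real.Gamma_pos_of_pos (by linarith)
    have hlog : Real.log (gam μ k) =
        Real.log (Nat.factorial m) + Real.log (Real.Gamma ((m:ℝ) + μ + 1/2)) := by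
      rw [hgam, Real.log_mul hmpos.ne' hGpos.ne']
    rw [hlog, hkr]
    have := abs_add_le (Real.log (Nat.factorial m) - ff m)
      (Real.log (Real.Gamma ((m:ℝ) + μ + 1/2)) - ff ((m:ℝ) + μ + 1/2))
    calc |Real.log (Nat.factorial m) + Real.log (Real.Gamma ((m:ℝ) + μ + 1/2)) -
          (ff m + ff ((m:ℝ) + μ + 1/2))| =
        |(Real.log (Nat.factorial m) - ff m) +
          (Real.log (Real.Gamma ((m:ℝ) + μ + 1/2)) - ff ((m:ℝ) + μ + 1/2))| := by ring_nf
      _ ≤ |Real.log (Nat.factorial m) - ff m| +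
          |Real.log (Real.Gamma ((m:ℝ) + μ + 1/2)) - ff ((m:ℝ) + μ + 1/2)| := this
      _ ≤ (1 + Real.log X) + (2 + 2 * Real.log X) := add_le_add hfe hgerr
      _ ≤ 6 * (1 + Real.log X) := by linarith
  · -- odd case : k = 2*m+1
    have hk2 : ¬ (k % 2 = 0) := by
      have := Nat.odd_iff.1 ho; omega
    have hkm : k = 2 * m + 1 := by
      have := Nat.odd_iff.1 ho; omega
    have hkr : (k:ℝ)/2 = (m:ℝ) + 1/2 := by
      rw [hkm]; push_cast; ring
    have hgam : gam μ k = (Nat.factorial m : ℝ) * Real.Gamma ((m:ℝ) + μ + 3/2) := by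
      rw [gam, if_neg hk2]
    have hGrec : Real.Gamma ((m:ℝ) + μ + 3/2) =
        ((m:ℝ) + μ + 1/2) * Real.Gamma ((m:ℝ) + μ + 1/2) := by
      have h32 : (m:ℝ) + μ + 3/2 = ((m:ℝ) + μ + 1/2) + 1 := by ring
      rw [h32, Real.Gamma_add_one (by linarith)]
    have hGpos : 0 < Real.Gamma ((m:ℝ) + μ + 1/2) := Real.Gamma_pos_of_pos (by linarith)
    have hlog : Real.log (gam μ k) = Real.log (Nat.factorial m) +
        (Real.log ((m:ℝ) + μ + 1/2) + Real.log (Real.Gamma ((m:ℝ) + μ + 1/2))) := by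
      rw [hgam, hGrec, Real.log_mul hmpos.ne' (by positivity),
        Real.log_mul (by linarith) hGpos.ne']
    -- ff shifts
    have hffm : |ff ((m:ℝ) + 1/2) - ff m| ≤ 1 + Real.log X := by
      rcases Nat.eq_zero_or_pos m with hm0 | hm
      · rw [hm0]
        have hl2 : Real.log ((1:ℝ)/2) = - Real.log 2 := by
          rw [Real.log_div one_ne_zero two_ne_zero]; simp
        have hv : ff (((0:ℕ):ℝ) + 1/2) = -(Real.log 2)/2 - 1/2 := by
          simp only [ff, Nat.cast_zero, zero_add]
          rw [hl2]; ring
        have hv0 : ff (((0:ℕ):ℝ)) = 0 := by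
          simp [ff]
        have hl2' : Real.log 2 ≤ 1 := by
          have := Real.log_le_sub_one_of_pos (x := 2) (by norm_num); linarith
        have hl2'' : 0 ≤ Real.log 2 := Real.log_nonneg (by norm_num)
        rw [hv, hv0, abs_le]
        constructor <;> linarith
      · have hm1 : (1:ℝ) ≤ (m:ℝ) := by exact_mod_cast hm
        have hs := ff_slope hm1 (by linarith : (m:ℝ) ≤ (m:ℝ) + 1/2)
        have hlm : Real.log ((m:ℝ) + 1/2) ≤ Real.log X := by
          apply Real.log_le_log (by linarith)
          simp [hXdef]; linarith
        have hl0 : 0 ≤ Real.log ((m:ℝ)) := Real.log_nonneg hm1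
        rw [abs_le]
        constructor <;> nlinarith [hs.1, hs.2, hlm, Real.log_nonneg (by linarith : (1:ℝ) ≤ (m:ℝ)+1/2)]
    have hffy : |ff ((m:ℝ) + 1/2 + μ + 1/2) - ff ((m:ℝ) + μ + 1/2)| ≤ Real.log X := by
      have h1 : (1:ℝ) ≤ (m:ℝ) + μ + 1/2 := by linarith
      have heq : (m:ℝ) + 1/2 + μ + 1/2 = ((m:ℝ) + μ + 1/2) + 1/2 := by ring
      rw [heq]
      have hs := ff_slope h1 (by linarith : (m:ℝ) + μ + 1/2 ≤ ((m:ℝ) + μ + 1/2) + 1/2)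
      have hlm : Real.log (((m:ℝ) + μ + 1/2) + 1/2) ≤ Real.log X := by
        apply Real.log_le_log (by linarith)
        simp [hXdef]; linarith
      have hl0 : 0 ≤ Real.log ((m:ℝ) + μ + 1/2) := Real.log_nonneg (by linarith)
      rw [abs_le]
      constructor <;> nlinarith [hs.1, hs.2, hlm,
        Real.log_nonneg (by linarith : (1:ℝ) ≤ ((m:ℝ)+μ+1/2)+1/2)]
    rw [hlog, hkr]
    have hysign : 0 ≤ Real.log ((m:ℝ) + μ + 1/2) := Real.log_nonneg (by linarith)
    have key : Real.log (Nat.factorial m) +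
        (Real.log ((m:ℝ) + μ + 1/2) + Real.log (Real.Gamma ((m:ℝ) + μ + 1/2))) -
        (ff ((m:ℝ) + 1/2) + ff ((m:ℝ) + 1/2 + μ + 1/2)) =
        (Real.log (Nat.factorial m) - ff m) + (ff m - ff ((m:ℝ)+1/2)) +
        Real.log ((m:ℝ) + μ + 1/2) +
        (Real.log (Real.Gamma ((m:ℝ) + μ + 1/2)) - ff ((m:ℝ) + μ + 1/2)) +
        (ff ((m:ℝ) + μ + 1/2) - ff ((m:ℝ) + 1/2 + μ + 1/2)) := by ring
    rw [key]
    have habs : ∀ a b c d e : ℝ, |a + b + c + d + e| ≤ |a| + |b| + |c| + |d| + |e| := by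
      intro a b c d e
      calc |a + b + c + d + e| ≤ |a + b + c + d| + |e| := abs_add_le _ _
        _ ≤ |a + b + c| + |d| + |e| := by linarith [abs_add_le (a+b+c) d]
        _ ≤ |a + b| + |c| + |d| + |e| := by linarith [abs_add_le (a+b) c]
        _ ≤ |a| + |b| + |c| + |d| + |e| := by linarith [abs_add_le a b]
    refine le_trans (habs _ _ _ _ _) ?_
    have e1 : |ff (m:ℝ) - ff ((m:ℝ)+1/2)| ≤ 1 + Real.log X := by
      rw [abs_sub_comm]; exact hffm
    have e2 : |Real.log ((m:ℝ) + μ + 1/2)| ≤ Real.log X := by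
      rw [abs_of_nonneg hysign]; exact hylog
    have e3 : |ff ((m:ℝ) + μ + 1/2) - ff ((m:ℝ) + 1/2 + μ + 1/2)| ≤ Real.log X := by
      rw [abs_sub_comm]; exact hffy
    linarith [hfe, e1, e2, e3, hgerr]

lemma Hident {n a : ℝ} (hn : 1 ≤ n) (ha : 1 ≤ a) :
    2 * FF (n/2) + (2 * FF (n/2 + a) - 2 * FF a) - (n * (a - 1/2) + n^2/2) * Real.log n
      = n^2 * HH (a/n) + (n/2) * Real.log n := by
  have hn0 : (0:ℝ) < n := by linarith
  have ha0 : (0:ℝ) < a := by linarith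
  have h1 : Real.log (n/2) = Real.log n - Real.log 2 :=
    Real.log_div hn0.ne' two_ne_zero
  have h2 : Real.log (n/2 + a) = Real.log n + Real.log (a/n + 1/2) := by
    rw [show n/2 + a = n * (a/n + 1/2) by field_simp; ring]
    rw [Real.log_mul hn0.ne' (by positivity)]
  have h3 : Real.log a = Real.log n + Real.log (a/n) := by
    rw [show a = n * (a/n) from by field_simp] 
    rw [Real.log_mul hn0.ne' (by positivity)]
    rw [show n * (a/n) = a from by field_simp]
  unfold FF HH
  rw [h1, h2, h3]
  have : (n/2 + a)^2 = n^2 * (a/n + 1/2)^2 := by field_simp; ring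
  have h4 : a^2 = n^2 * (a/n)^2 := by field_simp
  field_simp
  ring
lemma HHc {c : ℝ} (hc : 0 < c) :
    HH c = -(3 / 4 + (1 / 2) * Real.log 2 + c * (3 / 2 + Real.log 2)
        + c ^ 2 * Real.log (2 * c) - (c ^ 2 + c + 1 / 4) * Real.log (1 + 2 * c)) := by
  have h1 : Real.log (c + 1/2) = Real.log (1 + 2*c) - Real.log 2 := by
    rw [show c + 1/2 = (1 + 2*c)/2 by ring, Real.log_div (by positivity) two_ne_zero]
  have h2 : Real.log (2*c) = Real.log 2 + Real.log c := Real.log_mul two_ne_zero hc.ne'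
  unfold HH
  rw [h1, h2]
  ring

lemma sum_ff0 {n : ℕ} (hn : 2 ≤ n) :
    |(∑ k ∈ Finset.range n, ff ((k:ℝ)/2)) - 2 * FF ((n:ℝ)/2)| ≤
    2 * (((n:ℝ)/2) * (1 + Real.log ((n:ℝ)/2))) + 3 := by
  obtain ⟨m, rfl⟩ : ∃ m, n = m + 2 := ⟨n - 2, by omega⟩
  have h1 := Finset.sum_range_succ' (fun k : ℕ => ff ((k:ℝ)/2)) (m+1)
  have h2 := Finset.sum_range_succ' (fun k : ℕ => ff (((k+1:ℕ):ℝ)/2)) m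
  have hsplit : ∑ k ∈ Finset.range (m+2), ff ((k:ℝ)/2) =
      (∑ i ∈ Finset.range m, ff ((i:ℝ)/2 + 1)) + ff ((1:ℝ)/2) + ff 0 := by
    rw [h1, h2]
    have hc : ∀ i : ℕ, ff (((i+1+1:ℕ):ℝ)/2) = ff ((i:ℝ)/2 + 1) := by
      intro i; congr 1; push_cast; ring
    rw [Finset.sum_congr rfl (fun i _ => hc i)]
    norm_num
  have hre : True := trivial
  have hs := sum_ff 1 le_rfl m
  have harg : ((m:ℕ):ℝ)/2 + 1 = ((m+2:ℕ):ℝ)/2 := by push_cast; ring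
  rw [harg] at hs
  have hFF1 : FF 1 = -(3/4) := by
    unfold FF; simp
  rw [hFF1] at hs
  have hff0 : ff 0 = 0 := by simp [ff]
  have hffhalf : |ff ((1:ℝ)/2)| ≤ 1 := by
    have hl2 : Real.log ((1:ℝ)/2) = - Real.log 2 := by
      rw [Real.log_div one_ne_zero two_ne_zero]; simp
    have hl2' : Real.log 2 ≤ 1 := by
      have := Real.log_le_sub_one_of_pos (x := 2) (by norm_num); linarith
    have hl2'' : 0 ≤ Real.log 2 := Real.log_nonneg (by norm_num)
    unfold ff
    rw [hl2, abs_le]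
    constructor <;> nlinarith
  rw [hsplit, hff0, add_zero]
  rw [abs_le] at hs hffhalf ⊢
  constructor <;> nlinarith [hs.1, hs.2, hffhalf.1, hffhalf.2]

set_option maxHeartbeats 1000000 in
theorem stmt_16 (c : ℝ) (hc : 0 < c) (μ : ℕ → ℝ) (hμ : ∀ n, 0 ≤ μ n)
    (hlim : Filter.Tendsto (fun n => μ n / n) Filter.atTop (nhds c)) :
    Filter.Tendsto
      (fun n : ℕ => (1 / (n : ℝ) ^ 2) *
        (Real.log (Nat.factorial n) + (∑ k ∈ Finset.range n, Real.log (gam (μ n) k))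
          - ((n : ℝ) * μ n + (n : ℝ) ^ 2 / 2) * Real.log n))
      Filter.atTop
      (nhds (-(3 / 4 + (1 / 2) * Real.log 2 + c * (3 / 2 + Real.log 2)
        + c ^ 2 * Real.log (2 * c) - (c ^ 2 + c + 1 / 4) * Real.log (1 + 2 * c)))) := by
  have hlogn : Tendsto (fun n : ℕ => Real.log n / (n:ℝ)) atTop (𝓝 0) := by
    have h := Real.isLittleO_log_id_atTop.tendsto_div_nhds_zero
    have := h.comp (tendsto_natCast_atTop_atTop (R := ℝ))
    exact this
  -- τ_n → c
  have hτ : Tendsto (fun n : ℕ => (μ n + 1/2)/(n:ℝ)) atTop (𝓝 c) := by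
    have h2 := tendsto_const_div_atTop_nhds_zero_nat (1/2 : ℝ)
    have h3 := hlim.add h2
    rw [add_zero] at h3
    refine h3.congr (fun n => ?_)
    rw [← add_div]
  -- HH continuous at c
  have hHHc : ContinuousAt HH c := by
    have l1 : ContinuousAt (fun t : ℝ => Real.log (t + 1/2)) c := by
      have h : ContinuousAt (fun t : ℝ => t + 1/2) c := by fun_prop
      exact ContinuousAt.comp (Real.continuousAt_log (by positivity)) h
    have l2 : ContinuousAt (fun t : ℝ => Real.log t) c := Real.continuousAt_log hc.ne'
    show ContinuousAt (fun t : ℝ => (t + 1/2) ^ 2 * Real.log (t + 1/2) - t ^ 2 * Real.log t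
      - (1/4) * Real.log 2 - 3/4 - (3/2) * t) c
    refine ContinuousAt.sub (ContinuousAt.sub (ContinuousAt.sub
      (ContinuousAt.sub (ContinuousAt.mul (by fun_prop) l1)
        (ContinuousAt.mul (by fun_prop) l2)) continuousAt_const) continuousAt_const)
      (by fun_prop)
  have hψ : Tendsto (fun n : ℕ => HH ((μ n + 1/2)/(n:ℝ))) atTop
      (𝓝 (-(3 / 4 + (1 / 2) * Real.log 2 + c * (3 / 2 + Real.log 2)
        + c ^ 2 * Real.log (2 * c) - (c ^ 2 + c + 1 / 4) * Real.log (1 + 2 * c)))) := by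
    have := hHHc.tendsto.comp hτ
    rwa [HHc hc] at this
  -- eventually μ n ≥ 2
  have hev2 : ∀ᶠ n : ℕ in atTop, 2 ≤ μ n := by
    have h1 : ∀ᶠ n : ℕ in atTop, c/2 ≤ μ n / n := hlim.eventually_const_le (by linarith)
    filter_upwards [h1, eventually_ge_atTop (⌈(4:ℝ)/c⌉₊ + 1)] with n h1n h2n
    have hn : ((4:ℝ)/c) ≤ n := by
      have : (⌈(4:ℝ)/c⌉₊ : ℝ) ≤ n := by exact_mod_cast Nat.le_of_succ_le h2n
      exact le_trans (Nat.le_ceil _) this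
    have hn0 : (0:ℝ) < n := lt_of_lt_of_le (by positivity) hn
    rw [le_div_iff₀ hn0] at h1n
    have h4c : c * (4/c) = 4 := by field_simp
    nlinarith [mul_nonneg hc.le (sub_nonneg.2 hn)]
  -- the error function
  set E : ℕ → ℝ := fun n => 12 * (((n:ℝ) + μ n + 2) * (1 + Real.log ((n:ℝ) + μ n + 2)))
      / (n:ℝ)^2 + Real.log n / (2*(n:ℝ)) with hEdef
  -- E → 0
  have hA : Tendsto (fun n : ℕ => ((n:ℝ) + μ n + 2)/(n:ℝ)) atTop (𝓝 (1 + c)) := by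
    have hbase : Tendsto (fun n : ℕ => 1 + μ n / (n:ℝ) + 2/(n:ℝ)) atTop (𝓝 (1 + c + 0)) :=
      (tendsto_const_nhds.add hlim).add (tendsto_const_div_atTop_nhds_zero_nat 2)
    rw [add_zero] at hbase
    refine hbase.congr' ?_
    filter_upwards [eventually_ge_atTop 1] with n hn
    have hn0 : ((n:ℝ)) ≠ 0 := by
      have : (1:ℝ) ≤ n := by exact_mod_cast hn
      linarith
    field_simp
  have hB : Tendsto (fun n : ℕ => (1 + Real.log ((n:ℝ) + μ n + 2))/(n:ℝ)) atTop (𝓝 0) := by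
    have hnum : Tendsto (fun n : ℕ => 1 + Real.log (((n:ℝ) + μ n + 2)/(n:ℝ))) atTop
        (𝓝 (1 + Real.log (1 + c))) :=
      tendsto_const_nhds.add ((Real.continuousAt_log (by positivity)).tendsto.comp hA)
    have hquot : Tendsto (fun n : ℕ => (1 + Real.log (((n:ℝ) + μ n + 2)/(n:ℝ)))/(n:ℝ))
        atTop (𝓝 0) :=
      Tendsto.div_atTop hnum (tendsto_natCast_atTop_atTop (R := ℝ))
    have hsum := hquot.add hlogn
    rw [add_zero] at hsum
    refine hsum.congr' ?_
    filter_upwards [eventually_ge_atTop 1] with n hn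
    have hn1 : (1:ℝ) ≤ n := by exact_mod_cast hn
    have hn0 : ((n:ℝ)) ≠ 0 := by linarith
    have hX0 : (0:ℝ) < (n:ℝ) + μ n + 2 := by have := hμ n; linarith
    have hlogX : Real.log ((n:ℝ) + μ n + 2) =
        Real.log (((n:ℝ) + μ n + 2)/(n:ℝ)) + Real.log n := by
      rw [← Real.log_mul (by positivity) hn0]
      congr 1
      field_simp
    rw [hlogX]
    field_simp
    ring
  have hE0 : Tendsto E atTop (𝓝 0) := by
    have hP : Tendsto (fun n : ℕ => 12 * ((((n:ℝ) + μ n + 2)/(n:ℝ)) *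
        ((1 + Real.log ((n:ℝ) + μ n + 2))/(n:ℝ))) + (1/2) * (Real.log n / (n:ℝ)))
        atTop (𝓝 (12 * ((1+c) * 0) + (1/2) * 0)) :=
      ((hA.mul hB).const_mul 12).add (hlogn.const_mul (1/2))
    have : (12 : ℝ) * ((1+c) * 0) + (1/2) * 0 = 0 := by ring
    rw [this] at hP
    refine hP.congr' ?_
    filter_upwards [eventually_ge_atTop 1] with n hn
    have hn1 : (1:ℝ) ≤ n := by exact_mod_cast hn
    have hn0 : ((n:ℝ)) ≠ 0 := by linarith
    rw [hEdef]
    have hsq : ((n:ℝ))^2 = (n:ℝ) * (n:ℝ) := sq (n:ℝ) ▸ by ring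
    field_simp
  -- the eventual bound
  have hbound : ∀ᶠ n : ℕ in atTop,
      ‖(1 / (n : ℝ) ^ 2) *
        (Real.log (Nat.factorial n) + (∑ k ∈ Finset.range n, Real.log (gam (μ n) k))
          - ((n : ℝ) * μ n + (n : ℝ) ^ 2 / 2) * Real.log n)
        - HH ((μ n + 1/2)/(n:ℝ))‖ ≤ E n := by
    filter_upwards [hev2, eventually_ge_atTop 2] with n hμ2 hn2
    have hn2' : (2:ℝ) ≤ (n:ℝ) := by exact_mod_cast hn2
    have hn0 : (0:ℝ) < (n:ℝ) := by linarith
    have hn1 : (1:ℝ) ≤ (n:ℝ) := by linarith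
    set X : ℝ := (n:ℝ) + μ n + 2 with hXdef
    clear_value X
    have hX6 : (6:ℝ) ≤ X := by rw [hXdef]; linarith
    have hXlog : 1 ≤ Real.log X := by
      rw [Real.le_log_iff_exp_le (by linarith)]
      have := Real.exp_one_lt_d9
      linarith
    have hP0 : (0:ℝ) < X * (1 + Real.log X) := by nlinarith
    -- per-term sum bound
    have hS : |(∑ k ∈ Finset.range n, Real.log (gam (μ n) k)) -
        ∑ k ∈ Finset.range n, (ff ((k:ℝ)/2) + ff ((k:ℝ)/2 + μ n + 1/2))| ≤
        (n:ℝ) * (6 * (1 + Real.log X)) := by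
      rw [← Finset.sum_sub_distrib]
      refine le_trans (Finset.abs_sum_le_sum_abs _ _) ?_
      refine le_trans (Finset.sum_le_sum
        (fun k hk => per_term hμ2 (Finset.mem_range.1 hk))) ?_
      rw [Finset.sum_const, Finset.card_range, nsmul_eq_mul, hXdef]
    have hsplit : ∑ k ∈ Finset.range n, (ff ((k:ℝ)/2) + ff ((k:ℝ)/2 + μ n + 1/2)) =
        (∑ k ∈ Finset.range n, ff ((k:ℝ)/2)) +
        ∑ k ∈ Finset.range n, ff ((k:ℝ)/2 + (μ n + 1/2)) := by
      rw [Finset.sum_add_distrib]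
      congr 1
      exact Finset.sum_congr rfl (fun k _ => by rw [add_assoc])
    have h2 := sum_ff (μ n + 1/2) (by have := hμ n; linarith) n
    have h3 := sum_ff0 hn2
    have h4 : |Real.log (Nat.factorial n)| ≤ (n:ℝ) * Real.log n := by
      have hf1 : (1:ℝ) ≤ (Nat.factorial n : ℝ) := by
        exact_mod_cast Nat.one_le_iff_ne_zero.2 (Nat.factorial_pos n).ne'
      rw [abs_of_nonneg (Real.log_nonneg hf1)]
      calc Real.log (Nat.factorial n) ≤ Real.log ((n:ℝ)^n) := by
            apply Real.log_le_log (by linarith)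
            exact_mod_cast Nat.factorial_le_pow n
        _ = (n:ℝ) * Real.log n := by rw [Real.log_pow]
    have h5 := Hident (n := (n:ℝ)) (a := μ n + 1/2) hn1 (by have := hμ n; linarith)
    rw [show (μ n + 1/2) - 1/2 = μ n by ring] at h5
    -- arithmetic comparisons
    have c1 : (n:ℝ) * Real.log n ≤ X * (1 + Real.log X) := by
      have hln : Real.log (n:ℝ) ≤ Real.log X := Real.log_le_log hn0 (by rw [hXdef]; have := hμ n; linarith)
      have hln0 : 0 ≤ Real.log (n:ℝ) := Real.log_nonneg hn1
      nlinarith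
    have c2 : (n:ℝ) * (6 * (1 + Real.log X)) ≤ 6 * (X * (1 + Real.log X)) := by
      have hnX : (n:ℝ) ≤ X := by rw [hXdef]; have := hμ n; linarith
      nlinarith
    have c3 : 2 * (((n:ℝ)/2) * (1 + Real.log ((n:ℝ)/2))) + 3 ≤ 3 * (X * (1 + Real.log X)) := by
      have ht := tlog_mono (u := (n:ℝ)/2) (v := X) (by linarith) (by rw [hXdef]; have := hμ n; linarith)
      nlinarith
    have c4 : 2 * (((n:ℝ)/2 + (μ n + 1/2)) * (1 + Real.log ((n:ℝ)/2 + (μ n + 1/2)))) ≤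
        2 * (X * (1 + Real.log X)) := by
      have ht := tlog_mono (u := (n:ℝ)/2 + (μ n + 1/2)) (v := X)
        (by have := hμ n; linarith) (by rw [hXdef]; linarith)
      linarith
    -- decomposition
    have hdecomp : (Real.log (Nat.factorial n) + (∑ k ∈ Finset.range n, Real.log (gam (μ n) k))
          - ((n : ℝ) * μ n + (n : ℝ) ^ 2 / 2) * Real.log n)
        - ((n:ℝ)^2 * HH ((μ n + 1/2)/(n:ℝ)) + ((n:ℝ)/2) * Real.log n) =
        Real.log (Nat.factorial n)
        + ((∑ k ∈ Finset.range n, Real.log (gam (μ n) k)) -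
            ∑ k ∈ Finset.range n, (ff ((k:ℝ)/2) + ff ((k:ℝ)/2 + μ n + 1/2)))
        + ((∑ k ∈ Finset.range n, ff ((k:ℝ)/2)) - 2 * FF ((n:ℝ)/2))
        + ((∑ k ∈ Finset.range n, ff ((k:ℝ)/2 + (μ n + 1/2))) -
            (2 * FF ((n:ℝ)/2 + (μ n + 1/2)) - 2 * FF (μ n + 1/2))) := by
      rw [hsplit]
      linarith [h5]
    have habs4 : ∀ a b c d : ℝ, |a + b + c + d| ≤ |a| + |b| + |c| + |d| := by
      intro a b c d
      calc |a + b + c + d| ≤ |a + b + c| + |d| := abs_add_le _ _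
        _ ≤ |a + b| + |c| + |d| := by linarith [abs_add_le (a+b) c]
        _ ≤ |a| + |b| + |c| + |d| := by linarith [abs_add_le a b]
    have hkey : |(Real.log (Nat.factorial n) + (∑ k ∈ Finset.range n, Real.log (gam (μ n) k))
          - ((n : ℝ) * μ n + (n : ℝ) ^ 2 / 2) * Real.log n)
        - ((n:ℝ)^2 * HH ((μ n + 1/2)/(n:ℝ)) + ((n:ℝ)/2) * Real.log n)| ≤
        12 * (X * (1 + Real.log X)) := by
      rw [hdecomp]
      refine le_trans (habs4 _ _ _ _) ?_
      refine le_trans (add_le_add (add_le_add (add_le_add h4 hS) h3) h2) ?_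
      linarith [c1, c2, c3, c4]
    -- conclude
    have hφψ : (1 / (n : ℝ) ^ 2) *
        (Real.log (Nat.factorial n) + (∑ k ∈ Finset.range n, Real.log (gam (μ n) k))
          - ((n : ℝ) * μ n + (n : ℝ) ^ 2 / 2) * Real.log n)
        - HH ((μ n + 1/2)/(n:ℝ)) =
        ((Real.log (Nat.factorial n) + (∑ k ∈ Finset.range n, Real.log (gam (μ n) k))
          - ((n : ℝ) * μ n + (n : ℝ) ^ 2 / 2) * Real.log n)
        - ((n:ℝ)^2 * HH ((μ n + 1/2)/(n:ℝ)) + ((n:ℝ)/2) * Real.log n)) / (n:ℝ)^2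
        + Real.log n / (2*(n:ℝ)) := by
      field_simp
      ring
    rw [Real.norm_eq_abs, hφψ]
    have hlogn0 : 0 ≤ Real.log n := Real.log_nonneg hn1
    refine le_trans (abs_add_le _ _) ?_
    rw [hEdef]
    have e1 : |((Real.log (Nat.factorial n) + (∑ k ∈ Finset.range n, Real.log (gam (μ n) k))
          - ((n : ℝ) * μ n + (n : ℝ) ^ 2 / 2) * Real.log n)
        - ((n:ℝ)^2 * HH ((μ n + 1/2)/(n:ℝ)) + ((n:ℝ)/2) * Real.log n)) / (n:ℝ)^2| ≤
        12 * (X * (1 + Real.log X)) / (n:ℝ)^2 := by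
      rw [abs_div, abs_of_nonneg (by positivity : (0:ℝ) ≤ (n:ℝ)^2)]
      exact div_le_div_of_nonneg_right hkey (by positivity) |>.trans (le_refl _)
    have e2 : |Real.log n / (2*(n:ℝ))| = Real.log n / (2*(n:ℝ)) :=
      abs_of_nonneg (by positivity)
    rw [e2] at *
    simp only [hXdef] at e1 ⊢
    linarith [e1]
  -- final combination
  have hdiff := squeeze_zero_norm' hbound hE0
  have hfinal := hψ.add hdiff
  rw [add_zero] at hfinal
  refine hfinal.congr (fun n => by ring)
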